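/- Fix c₁ > 0 and c₀ ∈ ℝ. For real u and v with v > 0, the point s = u + iv satisfies Im J_{c₁,c₀}(s) = 0 if and only if c₁·v < π and u² = 1/4 + v·cot(c₁·v) − v². -/

import Mathlib

/-- The map `J_{c₁,c₀}(s) = c₁·s + c₀ − Log((s − 1/2)/(s + 1/2))`, with the principal branch of
the complex logarithm. -/
noncomputable def Jmap (c₁ c₀ : ℝ) (s : ℂ) : ℂ :=
  c₁ * s + c₀ - Complex.log ((s - 1/2) / (s + 1/2))

/-- For `s = u + iv` with `v > 0`, `Im J_{c₁,c₀}(s) = 0` if and only if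
`c₁·v < π` and `u² = 1/4 + v·cot(c₁v) − v²`. -/
theorem Jmap_real_locus
    (c₁ c₀ : ℝ) (hc₁ : 0 < c₁) (u v : ℝ) (hv : 0 < v) :
    (Jmap c₁ c₀ (Complex.mk u v)).im = 0 ↔
      c₁ * v < Real.pi ∧ u ^ 2 = 1/4 + v * Real.cot (c₁ * v) - v ^ 2 := by
  set s : ℂ := Complex.mk u v with hs
  set w : ℂ := (s - 1/2) / (s + 1/2) with hw
  have hs_re : s.re = u := rfl
  have hs_im : s.im = v := rfl
  set d : ℝ := (u + 1/2)^2 + v^2 with hd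
  have hd0 : 0 < d := by positivity
  have hre : w.re = (u^2 + v^2 - 1/4) / d := by
    rw [hw, Complex.div_re]
    simp [Complex.normSq_apply, hs_re, hs_im, hd]
    ring_nf
  have him : w.im = v / d := by
    rw [hw, Complex.div_im]
    simp [Complex.normSq_apply, hs_re, hs_im, hd]
    ring_nf
  have hwim : 0 < w.im := by rw [him]; positivity
  have hw0 : w ≠ 0 := by
    intro h; rw [h] at hwim; simp at hwim
  have hJ : (Jmap c₁ c₀ s).im = c₁ * v - Complex.arg w := by
    simp only [Jmap, Complex.sub_im, Complex.add_im, Complex.mul_im, Complex.ofReal_re,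
      Complex.ofReal_im, Complex.log_im, hs_im, hs_re]
    rw [hw]
    norm_num
  rw [hJ, sub_eq_zero]
  constructor
  · intro h
    have hargpi : Complex.arg w < Real.pi := by
      rcases lt_or_eq_of_le (Complex.arg_le_pi w) with h' | h'
      · exact h'
      · exact absurd (Complex.arg_eq_pi_iff.mp h').2 (ne_of_gt hwim)
    have habs : (0:ℝ) < ‖w‖ := norm_pos_iff.mpr hw0
    have hsin : Real.sin (Complex.arg w) = w.im / ‖w‖ := Complex.sin_arg w
    have hcos : Real.cos (Complex.arg w) = w.re / ‖w‖ := Complex.cos_arg hw0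
    have hcot : Real.cot (c₁ * v) = w.re / w.im := by
      rw [h, Real.cot_eq_cos_div_sin, hcos, hsin]
      field_simp
    refine ⟨h ▸ hargpi, ?_⟩
    rw [hcot, hre, him]
    field_simp
    ring
  · rintro ⟨hπ, hu⟩
    have hθ : 0 < c₁ * v := mul_pos hc₁ hv
    have hsinθ : 0 < Real.sin (c₁ * v) := Real.sin_pos_of_pos_of_lt_pi hθ hπ
    have hr : (0:ℝ) < w.im / Real.sin (c₁ * v) := div_pos hwim hsinθ
    have hweq : w = ((w.im / Real.sin (c₁ * v) : ℝ) : ℂ) *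
        (Real.cos (c₁ * v) + Real.sin (c₁ * v) * Complex.I) := by
      apply Complex.ext
      · simp only [Complex.add_re, Complex.mul_re, Complex.ofReal_re, Complex.ofReal_im,
          Complex.mul_im, Complex.I_re, Complex.I_im]
        have : w.re = w.im * (Real.cos (c₁ * v) / Real.sin (c₁ * v)) := by
          rw [← Real.cot_eq_cos_div_sin, hre, him,
            show u^2 + v^2 - 1/4 = v * Real.cot (c₁ * v) by linarith]
          ring
        rw [this]
        field_simp
        ring
      · simp only [Complex.add_im, Complex.mul_im, Complex.ofReal_re, Complex.ofReal_im,
          Complex.mul_re, Complex.I_re, Complex.I_im]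
        field_simp
        ring
    rw [hweq, Complex.arg_real_mul _ hr, Complex.ofReal_cos, Complex.ofReal_sin,
      Complex.arg_cos_add_sin_mul_I
      ⟨lt_trans (neg_neg_iff_pos.mpr Real.pi_pos) hθ, le_of_lt hπ⟩]
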